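/- arXiv:math/0309392 — 3 statements merged into one kernel-verified Lean document; each statement's English description precedes it below -/
import Mathlib

section
/- Let (ΛV, d) be the free commutative DG algebra ΛV = Λ(x₁, x₂, y₁, y₂, y₃) over ℚ with |x₁| = |x₂| = 2, |y₁| = |y₂| = |y₃| = 3, dx₁ = dx₂ = 0, dy₁ = x₁², dy₂ = x₁x₂, dy₃ = x₂². Then the cohomology H(ΛV) is finite-dimensional of total dimension 6, with dim H⁰ = 1, the classes [x₁], [x₂] spanning a 2-dimensional space of word-length-1 classes, exactly two linearly independent classes of word-length 2, and a 1-dimensional top class of word-length 3. -/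
/-- Index type for the monomial basis `x₁^a x₂^b y₁^{e₁} y₂^{e₂} y₃^{e₃}` of
`Λ(x₁, x₂, y₁, y₂, y₃)`. -/
abbrev MIdx : Type := ℕ × ℕ × Bool × Bool × Bool

/-- Word length of a monomial. -/
def mLen (i : MIdx) : ℕ :=
  i.1 + i.2.1 + i.2.2.1.toNat + i.2.2.2.1.toNat + i.2.2.2.2.toNat

/-- Number of odd (exterior) factors of a monomial; its parity is the parity of the
topological degree. -/
def mOdd (i : MIdx) : ℕ :=
  i.2.2.1.toNat + i.2.2.2.1.toNat + i.2.2.2.2.toNat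

section AuxDefs
variable {A : Type} [Ring A] [Algebra ℚ A] (bb : Module.Basis MIdx ℚ A)

/-- Value of the differential on a basis monomial. -/
noncomputable def dval : MIdx → A
  | (a, b, true, false, false) => bb (a+2, b, false, false, false)
  | (a, b, false, true, false) => bb (a+1, b+1, false, false, false)
  | (a, b, false, false, true) => bb (a, b+2, false, false, false)
  | (a, b, true, true, false) => bb (a+2,b,false,true,false) - bb (a+1,b+1,true,false,false)
  | (a, b, true, false, true) => bb (a+2,b,false,false,true) - bb (a,b+2,true,false,false)
  | (a, b, false, true, true) => bb (a+1,b+1,false,false,true) - bb (a,b+2,false,true,false)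
  | (a, b, true, true, true) =>
      bb (a+2,b,false,true,true) - bb (a+1,b+1,true,false,true) + bb (a,b+2,true,true,false)
  | _ => 0

noncomputable def f000 : ℕ → ℕ → A
  | a+2, b => bb (a,b,true,false,false)
  | 1, b+1 => bb (0,b,false,true,false)
  | 0, b+2 => bb (0,b,false,false,true)
  | _, _ => 0
noncomputable def f010 : ℕ → ℕ → A
  | a+2, b => bb (a,b,true,true,false)
  | 1, b+2 => bb (0,b+1,true,false,true) - bb (1,b,false,true,true)
  | 1, 1 => bb (0,0,true,false,true)
  | _, _ => 0
noncomputable def f001 : ℕ → ℕ → A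
  | a+2, b => bb (a,b,true,false,true)
  | 1, b+1 => bb (0,b,false,true,true)
  | _, _ => 0
noncomputable def f011 : ℕ → ℕ → A
  | a+2, b => bb (a,b,true,true,true)
  | _, _ => 0

/-- The contracting homotopy on basis monomials. -/
noncomputable def hm : MIdx → A
  | (a, b, false, false, false) => f000 bb a b
  | (a, b, false, true, false) => f010 bb a b
  | (a, b, false, false, true) => f001 bb a b
  | (a, b, false, true, true) => f011 bb a b
  | _ => 0

noncomputable def p000 : ℕ → ℕ → A
  | 0, 0 => bb (0,0,false,false,false)
  | 1, 0 => bb (1,0,false,false,false)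
  | 0, 1 => bb (0,1,false,false,false)
  | _, _ => 0
noncomputable def p010 : ℕ → ℕ → A
  | 1, 0 => bb (1,0,false,true,false) - bb (0,1,true,false,false)
  | 1, 1 => bb (1,1,false,true,false) - bb (2,0,false,false,true)
  | _, _ => 0
noncomputable def p001 : ℕ → ℕ → A
  | 1, 0 => bb (1,0,false,false,true) - bb (0,1,false,true,false)
  | _, _ => 0

/-- The harmonic projection on basis monomials. -/
noncomputable def pv : MIdx → A
  | (a, b, false, false, false) => p000 bb a b
  | (a, b, false, true, false) => p010 bb a b
  | (a, b, false, false, true) => p001 bb a b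
  | _ => 0

/-- The six harmonic representatives. -/
noncomputable def wv : Fin 6 → A :=
  ![bb (0,0,false,false,false), bb (1,0,false,false,false), bb (0,1,false,false,false),
    bb (1,0,false,true,false) - bb (0,1,true,false,false),
    bb (1,0,false,false,true) - bb (0,1,false,true,false),
    bb (1,1,false,true,false) - bb (2,0,false,false,true)]

/-- Coordinates detecting the harmonic representatives and vanishing on boundaries. -/
def pidx : Fin 6 → MIdx :=
  ![(0,0,false,false,false), (1,0,false,false,false), (0,1,false,false,false),
    (0,1,true,false,false), (0,1,false,true,false), (1,1,false,true,false)]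

/-- Word lengths of the six harmonic representatives. -/
def wLen : Fin 6 → ℕ := ![0,1,1,2,2,3]

end AuxDefs

theorem rangePair {α : Type*} (a b : α) : Set.range ![a, b] = {a, b} := by
  ext x
  simp [Fin.exists_fin_two, eq_comm, or_comm]

theorem dbb
    {A : Type} [Ring A] [Algebra ℚ A]
    (x₁ x₂ y₁ y₂ y₃ : A)
    (bb : Module.Basis MIdx ℚ A)
    (hbb : ∀ (a b : ℕ) (e₁ e₂ e₃ : Bool),
      bb (a, b, e₁, e₂, e₃) =
        x₁ ^ a * x₂ ^ b * (if e₁ then y₁ else 1) * (if e₂ then y₂ else 1) *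
          (if e₃ then y₃ else 1))
    (hx₁c : ∀ a : A, x₁ * a = a * x₁) (hx₂c : ∀ a : A, x₂ * a = a * x₂)
    (d : A →ₗ[ℚ] A)
    (hx₁ : x₁ ∈ LinearMap.ker d) (hx₂ : x₂ ∈ LinearMap.ker d)
    (hy₁ : d y₁ = x₁ ^ 2) (hy₂ : d y₂ = x₁ * x₂) (hy₃ : d y₃ = x₂ ^ 2)
    (hleibeven : ∀ a ∈ Submodule.span ℚ (bb '' {i | Even (mOdd i)}), ∀ b : A,
      d (a * b) = d a * b + a * d b)
    (hleibodd : ∀ a ∈ Submodule.span ℚ (bb '' {i | Odd (mOdd i)}), ∀ b : A,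
      d (a * b) = d a * b - a * d b) :
    ∀ i : MIdx, d (bb i) = dval bb i := by
  have c1 : ∀ (z : A) (n : ℕ), z * x₁ ^ n = x₁ ^ n * z := fun z n =>
    ((Commute.pow_left (show Commute x₁ z from hx₁c z) n).eq).symm
  have c2 : ∀ (z : A) (n : ℕ), z * x₂ ^ n = x₂ ^ n * z := fun z n =>
    ((Commute.pow_left (show Commute x₂ z from hx₂c z) n).eq).symm
  have mulXX : ∀ a b c e : ℕ, (x₁^a * x₂^b) * (x₁^c * x₂^e) = x₁^(a+c) * x₂^(b+e) := by
    intro a b c e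
    rw [mul_assoc (x₁^a), ← mul_assoc (x₂^b), c1 (x₂^b) c, mul_assoc (x₁^c),
      ← mul_assoc (x₁^a), ← pow_add, ← pow_add]
  have mulX3 : ∀ (a b c e : ℕ) (z : A),
      (x₁^a * x₂^b) * ((x₁^c * x₂^e) * z) = (x₁^(a+c) * x₂^(b+e)) * z := by
    intro a b c e z
    rw [← mul_assoc, mulXX]
  -- bb in normal form
  have hbbFFF : ∀ a b : ℕ, bb (a, b, false, false, false) = (x₁^a * x₂^b) * 1 := by
    intro a b; rw [hbb]; simp
  have hbbTFF : ∀ a b : ℕ, bb (a, b, true, false, false) = (x₁^a * x₂^b) * y₁ := by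
    intro a b; rw [hbb]; simp
  have hbbFTF : ∀ a b : ℕ, bb (a, b, false, true, false) = (x₁^a * x₂^b) * y₂ := by
    intro a b; rw [hbb]; simp
  have hbbFFT : ∀ a b : ℕ, bb (a, b, false, false, true) = (x₁^a * x₂^b) * y₃ := by
    intro a b; rw [hbb]; simp
  have hbbTTF : ∀ a b : ℕ, bb (a, b, true, true, false) = (x₁^a * x₂^b) * (y₁ * y₂) := by
    intro a b; rw [hbb]; simp [mul_assoc]
  have hbbTFT : ∀ a b : ℕ, bb (a, b, true, false, true) = (x₁^a * x₂^b) * (y₁ * y₃) := by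
    intro a b; rw [hbb]; simp [mul_assoc]
  have hbbFTT : ∀ a b : ℕ, bb (a, b, false, true, true) = (x₁^a * x₂^b) * (y₂ * y₃) := by
    intro a b; rw [hbb]; simp [mul_assoc]
  have hbbTTT : ∀ a b : ℕ, bb (a, b, true, true, true) = (x₁^a * x₂^b) * ((y₁ * y₂) * y₃) := by
    intro a b; rw [hbb]; simp [mul_assoc]
  -- memberships
  have memE : ∀ i : MIdx, Even (mOdd i) → bb i ∈ Submodule.span ℚ (bb '' {i | Even (mOdd i)}) :=
    fun i hi => Submodule.subset_span ⟨i, hi, rfl⟩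
  have memO : ∀ i : MIdx, Odd (mOdd i) → bb i ∈ Submodule.span ℚ (bb '' {i | Odd (mOdd i)}) :=
    fun i hi => Submodule.subset_span ⟨i, hi, rfl⟩
  have memX : ∀ a b : ℕ, x₁^a * x₂^b ∈ Submodule.span ℚ (bb '' {i | Even (mOdd i)}) := by
    intro a b
    have : x₁^a * x₂^b = bb (a, b, false, false, false) := by rw [hbbFFF, mul_one]
    rw [this]; exact memE _ (by simp [mOdd])
  have memY1 : y₁ ∈ Submodule.span ℚ (bb '' {i | Odd (mOdd i)}) := by
    have : y₁ = bb (0,0,true,false,false) := by rw [hbbTFF]; simp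
    rw [this]; exact memO _ (by simp [mOdd])
  have memY2 : y₂ ∈ Submodule.span ℚ (bb '' {i | Odd (mOdd i)}) := by
    have : y₂ = bb (0,0,false,true,false) := by rw [hbbFTF]; simp
    rw [this]; exact memO _ (by simp [mOdd])
  have memY12 : y₁ * y₂ ∈ Submodule.span ℚ (bb '' {i | Even (mOdd i)}) := by
    have : y₁ * y₂ = bb (0,0,true,true,false) := by rw [hbbTTF]; simp
    rw [this]; exact memE _ (by simp [mOdd])
  -- d on x-part
  have hd1 : d (1 : A) = 0 := by
    have h := hleibeven 1 (by simpa using memX 0 0) 1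
    simp only [one_mul, mul_one] at h
    exact (left_eq_add.mp h)
  have hdx1 : ∀ n : ℕ, d (x₁^n) = 0 := by
    intro n; induction n with
    | zero => simpa using hd1
    | succ n ih =>
      rw [pow_succ, hleibeven (x₁^n) (by simpa using memX n 0) x₁, ih,
        LinearMap.mem_ker.mp hx₁]
      simp
  have hdx2 : ∀ n : ℕ, d (x₂^n) = 0 := by
    intro n; induction n with
    | zero => simpa using hd1
    | succ n ih =>
      rw [pow_succ, hleibeven (x₂^n) (by simpa using memX 0 n) x₂, ih,
        LinearMap.mem_ker.mp hx₂]
      simp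
  have hdX : ∀ a b : ℕ, d (x₁^a * x₂^b) = 0 := by
    intro a b
    rw [hleibeven (x₁^a) (by simpa using memX a 0) (x₂^b), hdx1, hdx2]
    simp
  have hdXmul : ∀ (a b : ℕ) (z : A), d ((x₁^a * x₂^b) * z) = (x₁^a * x₂^b) * d z := by
    intro a b z
    rw [hleibeven _ (memX a b) z, hdX]
    simp
  -- d on y-part, normal form
  have hdy1X : d y₁ = (x₁^2 * x₂^0) * 1 := by simp [hy₁]
  have hdy2X : d y₂ = (x₁^1 * x₂^1) * 1 := by simp [hy₂]
  have hdy3X : d y₃ = (x₁^0 * x₂^2) * 1 := by simp [hy₃]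
  have move12 : ∀ z : A, z * (x₁ * x₂) = (x₁ * x₂) * z := by
    intro z; rw [← mul_assoc, ← hx₁c z, mul_assoc, ← hx₂c z, ← mul_assoc]
  have hdy12 : d (y₁ * y₂) = (x₁^2 * x₂^0) * y₂ - (x₁^1 * x₂^1) * y₁ := by
    rw [hleibodd y₁ memY1 y₂, hy₁, hy₂, move12 y₁]
    simp [pow_one, mul_assoc]
  have hdy13 : d (y₁ * y₃) = (x₁^2 * x₂^0) * y₃ - (x₁^0 * x₂^2) * y₁ := by
    rw [hleibodd y₁ memY1 y₃, hy₁, hy₃, c2 y₁ 2]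
    simp
  have hdy23 : d (y₂ * y₃) = (x₁^1 * x₂^1) * y₃ - (x₁^0 * x₂^2) * y₂ := by
    rw [hleibodd y₂ memY2 y₃, hy₂, hy₃, c2 y₂ 2]
    simp [pow_one, mul_assoc]
  have hdy123 : d ((y₁ * y₂) * y₃) =
      (x₁^2 * x₂^0) * (y₂ * y₃) - (x₁^1 * x₂^1) * (y₁ * y₃) + (x₁^0 * x₂^2) * (y₁ * y₂) := by
    rw [hleibeven (y₁ * y₂) memY12 y₃, hdy12, hy₃, c2 (y₁ * y₂) 2, sub_mul,
      mul_assoc (x₁^2 * x₂^0) y₂ y₃, mul_assoc (x₁^1 * x₂^1) y₁ y₃]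
    simp only [pow_zero, one_mul, mul_one]

  rintro ⟨a, b, e₁, e₂, e₃⟩
  cases e₁ <;> cases e₂ <;> cases e₃
  · -- FFF
    show d (bb (a,b,false,false,false)) = (0 : A)
    rw [hbbFFF, mul_one]; exact hdX a b
  · -- FFT
    show d (bb (a,b,false,false,true)) = bb (a, b+2, false, false, false)
    rw [hbbFFT, hdXmul, hdy3X, mulX3, hbbFFF]
    norm_num
  · -- FTF
    show d (bb (a,b,false,true,false)) = bb (a+1, b+1, false, false, false)
    rw [hbbFTF, hdXmul, hdy2X, mulX3, hbbFFF]
  · -- FTT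
    show d (bb (a,b,false,true,true)) =
      bb (a+1,b+1,false,false,true) - bb (a,b+2,false,true,false)
    rw [hbbFTT, hdXmul, hdy23, mul_sub, mulX3, mulX3, hbbFFT, hbbFTF]
    norm_num
  · -- TFF
    show d (bb (a,b,true,false,false)) = bb (a+2, b, false, false, false)
    rw [hbbTFF, hdXmul, hdy1X, mulX3, hbbFFF]
    norm_num
  · -- TFT
    show d (bb (a,b,true,false,true)) =
      bb (a+2,b,false,false,true) - bb (a,b+2,true,false,false)
    rw [hbbTFT, hdXmul, hdy13, mul_sub, mulX3, mulX3, hbbFFT, hbbTFF]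
    norm_num
  · -- TTF
    show d (bb (a,b,true,true,false)) =
      bb (a+2,b,false,true,false) - bb (a+1,b+1,true,false,false)
    rw [hbbTTF, hdXmul, hdy12, mul_sub, mulX3, mulX3, hbbFTF, hbbTFF]
    norm_num
  · -- TTT
    show d (bb (a,b,true,true,true)) =
      bb (a+2,b,false,true,true) - bb (a+1,b+1,true,false,true) + bb (a,b+2,true,true,false)
    rw [hbbTTT, hdXmul, hdy123, mul_add, mul_sub, mulX3, mulX3, mulX3, hbbFTT, hbbTFT, hbbTTF]
    norm_num

theorem hkey {A : Type} [Ring A] [Algebra ℚ A] (bb : Module.Basis MIdx ℚ A)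
    (d : A →ₗ[ℚ] A) (hdv : ∀ i, d (bb i) = dval bb i) :
    ∀ i : MIdx, bb i =
      d ((bb.constr ℕ (hm bb)) (bb i)) + (bb.constr ℕ (hm bb)) (d (bb i)) + pv bb i := by
  set h : A →ₗ[ℚ] A := bb.constr ℕ (hm bb) with hdef
  have hb : ∀ j : MIdx, h (bb j) = hm bb j := fun j => bb.constr_basis ℕ (hm bb) j
  rintro ⟨a, b, e₁, e₂, e₃⟩
  cases e₁ <;> cases e₂ <;> cases e₃
  · -- FFF
    match a, b with
    | 0, 0 =>
      have d1 : d (bb (0,0,false,false,false)) = 0 := hdv _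
      have h1 : h (bb (0,0,false,false,false)) = 0 := hb _
      rw [d1, h1, map_zero, map_zero]
      show bb (0,0,false,false,false) = 0 + 0 + bb (0,0,false,false,false); abel
    | 1, 0 =>
      have d1 : d (bb (1,0,false,false,false)) = 0 := hdv _
      have h1 : h (bb (1,0,false,false,false)) = 0 := hb _
      rw [d1, h1, map_zero, map_zero]
      show bb (1,0,false,false,false) = 0 + 0 + bb (1,0,false,false,false); abel
    | 0, 1 =>
      have d1 : d (bb (0,1,false,false,false)) = 0 := hdv _
      have h1 : h (bb (0,1,false,false,false)) = 0 := hb _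
      rw [d1, h1, map_zero, map_zero]
      show bb (0,1,false,false,false) = 0 + 0 + bb (0,1,false,false,false); abel
    | a+2, b =>
      have d1 : d (bb (a+2,b,false,false,false)) = 0 := hdv _
      have h1 : h (bb (a+2,b,false,false,false)) = bb (a,b,true,false,false) := hb _
      have d2 : d (bb (a,b,true,false,false)) = bb (a+2,b,false,false,false) := hdv _
      rw [d1, h1, d2, map_zero]
      show bb (a+2,b,false,false,false) = bb (a+2,b,false,false,false) + 0 + 0; abel
    | 1, b+1 =>
      have d1 : d (bb (1,b+1,false,false,false)) = 0 := hdv _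
      have h1 : h (bb (1,b+1,false,false,false)) = bb (0,b,false,true,false) := hb _
      have d2 : d (bb (0,b,false,true,false)) = bb (1,b+1,false,false,false) := hdv _
      rw [d1, h1, d2, map_zero]
      show bb (1,b+1,false,false,false) = bb (1,b+1,false,false,false) + 0 + 0; abel
    | 0, b+2 =>
      have d1 : d (bb (0,b+2,false,false,false)) = 0 := hdv _
      have h1 : h (bb (0,b+2,false,false,false)) = bb (0,b,false,false,true) := hb _
      have d2 : d (bb (0,b,false,false,true)) = bb (0,b+2,false,false,false) := hdv _
      rw [d1, h1, d2, map_zero]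
      show bb (0,b+2,false,false,false) = bb (0,b+2,false,false,false) + 0 + 0; abel
  · -- FFT  (e₃ = true)
    match a, b with
    | 0, b =>
      have d1 : d (bb (0,b,false,false,true)) = bb (0,b+2,false,false,false) := hdv _
      have h1 : h (bb (0,b,false,false,true)) = 0 := hb _
      have h2 : h (bb (0,b+2,false,false,false)) = bb (0,b,false,false,true) := hb _
      rw [d1, h1, h2, map_zero]
      show bb (0,b,false,false,true) = 0 + bb (0,b,false,false,true) + 0; abel
    | 1, 0 =>
      have d1 : d (bb (1,0,false,false,true)) = bb (1,2,false,false,false) := hdv _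
      have h1 : h (bb (1,0,false,false,true)) = 0 := hb _
      have h2 : h (bb (1,2,false,false,false)) = bb (0,1,false,true,false) := hb _
      rw [d1, h1, h2, map_zero]
      show bb (1,0,false,false,true) =
        0 + bb (0,1,false,true,false) +
          (bb (1,0,false,false,true) - bb (0,1,false,true,false)); abel
    | 1, b+1 =>
      have d1 : d (bb (1,b+1,false,false,true)) = bb (1,b+3,false,false,false) := hdv _
      have h1 : h (bb (1,b+1,false,false,true)) = bb (0,b,false,true,true) := hb _
      have h2 : h (bb (1,b+3,false,false,false)) = bb (0,b+2,false,true,false) := hb _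
      have d2 : d (bb (0,b,false,true,true)) =
        bb (1,b+1,false,false,true) - bb (0,b+2,false,true,false) := hdv _
      rw [d1, h1, h2, d2]
      show bb (1,b+1,false,false,true) =
        (bb (1,b+1,false,false,true) - bb (0,b+2,false,true,false)) +
          bb (0,b+2,false,true,false) + 0; abel
    | a+2, b =>
      have d1 : d (bb (a+2,b,false,false,true)) = bb (a+2,b+2,false,false,false) := hdv _
      have h1 : h (bb (a+2,b,false,false,true)) = bb (a,b,true,false,true) := hb _
      have h2 : h (bb (a+2,b+2,false,false,false)) = bb (a,b+2,true,false,false) := hb _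
      have d2 : d (bb (a,b,true,false,true)) =
        bb (a+2,b,false,false,true) - bb (a,b+2,true,false,false) := hdv _
      rw [d1, h1, h2, d2]
      show bb (a+2,b,false,false,true) =
        (bb (a+2,b,false,false,true) - bb (a,b+2,true,false,false)) +
          bb (a,b+2,true,false,false) + 0; abel
  · -- FTF
    match a, b with
    | 0, b =>
      have d1 : d (bb (0,b,false,true,false)) = bb (1,b+1,false,false,false) := hdv _
      have h1 : h (bb (0,b,false,true,false)) = 0 := hb _
      have h2 : h (bb (1,b+1,false,false,false)) = bb (0,b,false,true,false) := hb _
      rw [d1, h1, h2, map_zero]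
      show bb (0,b,false,true,false) = 0 + bb (0,b,false,true,false) + 0; abel
    | 1, 0 =>
      have d1 : d (bb (1,0,false,true,false)) = bb (2,1,false,false,false) := hdv _
      have h1 : h (bb (1,0,false,true,false)) = 0 := hb _
      have h2 : h (bb (2,1,false,false,false)) = bb (0,1,true,false,false) := hb _
      rw [d1, h1, h2, map_zero]
      show bb (1,0,false,true,false) =
        0 + bb (0,1,true,false,false) +
          (bb (1,0,false,true,false) - bb (0,1,true,false,false)); abel
    | 1, 1 =>
      have d1 : d (bb (1,1,false,true,false)) = bb (2,2,false,false,false) := hdv _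
      have h1 : h (bb (1,1,false,true,false)) = bb (0,0,true,false,true) := hb _
      have h2 : h (bb (2,2,false,false,false)) = bb (0,2,true,false,false) := hb _
      have d2 : d (bb (0,0,true,false,true)) =
        bb (2,0,false,false,true) - bb (0,2,true,false,false) := hdv _
      rw [d1, h1, h2, d2]
      show bb (1,1,false,true,false) =
        (bb (2,0,false,false,true) - bb (0,2,true,false,false)) + bb (0,2,true,false,false) +
          (bb (1,1,false,true,false) - bb (2,0,false,false,true)); abel
    | 1, b+2 =>
      have d1 : d (bb (1,b+2,false,true,false)) = bb (2,b+3,false,false,false) := hdv _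
      have h1 : h (bb (1,b+2,false,true,false)) =
        bb (0,b+1,true,false,true) - bb (1,b,false,true,true) := hb _
      have h2 : h (bb (2,b+3,false,false,false)) = bb (0,b+3,true,false,false) := hb _
      have d2 : d (bb (0,b+1,true,false,true)) =
        bb (2,b+1,false,false,true) - bb (0,b+3,true,false,false) := hdv _
      have d3 : d (bb (1,b,false,true,true)) =
        bb (2,b+1,false,false,true) - bb (1,b+2,false,true,false) := hdv _
      rw [d1, h1, h2, map_sub, d2, d3]
      show bb (1,b+2,false,true,false) =
        ((bb (2,b+1,false,false,true) - bb (0,b+3,true,false,false)) -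
          (bb (2,b+1,false,false,true) - bb (1,b+2,false,true,false))) +
          bb (0,b+3,true,false,false) + 0; abel
    | a+2, b =>
      have d1 : d (bb (a+2,b,false,true,false)) = bb (a+3,b+1,false,false,false) := hdv _
      have h1 : h (bb (a+2,b,false,true,false)) = bb (a,b,true,true,false) := hb _
      have h2 : h (bb (a+3,b+1,false,false,false)) = bb (a+1,b+1,true,false,false) := hb _
      have d2 : d (bb (a,b,true,true,false)) =
        bb (a+2,b,false,true,false) - bb (a+1,b+1,true,false,false) := hdv _
      rw [d1, h1, h2, d2]
      show bb (a+2,b,false,true,false) =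
        (bb (a+2,b,false,true,false) - bb (a+1,b+1,true,false,false)) +
          bb (a+1,b+1,true,false,false) + 0; abel
  · -- FTT
    match a, b with
    | 0, b =>
      have d1 : d (bb (0,b,false,true,true)) =
        bb (1,b+1,false,false,true) - bb (0,b+2,false,true,false) := hdv _
      have h1 : h (bb (0,b,false,true,true)) = 0 := hb _
      have h2 : h (bb (1,b+1,false,false,true)) = bb (0,b,false,true,true) := hb _
      have h3 : h (bb (0,b+2,false,true,false)) = 0 := hb _
      rw [d1, h1, map_sub, h2, h3, map_zero]
      show bb (0,b,false,true,true) = 0 + (bb (0,b,false,true,true) - 0) + 0; abel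
    | 1, b =>
      have d1 : d (bb (1,b,false,true,true)) =
        bb (2,b+1,false,false,true) - bb (1,b+2,false,true,false) := hdv _
      have h1 : h (bb (1,b,false,true,true)) = 0 := hb _
      have h2 : h (bb (2,b+1,false,false,true)) = bb (0,b+1,true,false,true) := hb _
      have h3 : h (bb (1,b+2,false,true,false)) =
        bb (0,b+1,true,false,true) - bb (1,b,false,true,true) := hb _
      rw [d1, h1, map_sub, h2, h3, map_zero]
      show bb (1,b,false,true,true) =
        0 + (bb (0,b+1,true,false,true) -
          (bb (0,b+1,true,false,true) - bb (1,b,false,true,true))) + 0; abel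
    | a+2, b =>
      have d1 : d (bb (a+2,b,false,true,true)) =
        bb (a+3,b+1,false,false,true) - bb (a+2,b+2,false,true,false) := hdv _
      have h1 : h (bb (a+2,b,false,true,true)) = bb (a,b,true,true,true) := hb _
      have h2 : h (bb (a+3,b+1,false,false,true)) = bb (a+1,b+1,true,false,true) := hb _
      have h3 : h (bb (a+2,b+2,false,true,false)) = bb (a,b+2,true,true,false) := hb _
      have d2 : d (bb (a,b,true,true,true)) =
        bb (a+2,b,false,true,true) - bb (a+1,b+1,true,false,true) +
          bb (a,b+2,true,true,false) := hdv _
      rw [d1, h1, map_sub, h2, h3, d2]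
      show bb (a+2,b,false,true,true) =
        (bb (a+2,b,false,true,true) - bb (a+1,b+1,true,false,true) +
          bb (a,b+2,true,true,false)) +
          (bb (a+1,b+1,true,false,true) - bb (a,b+2,true,true,false)) + 0; abel
  · -- TFF
    have d1 : d (bb (a,b,true,false,false)) = bb (a+2,b,false,false,false) := hdv _
    have h1 : h (bb (a,b,true,false,false)) = 0 := hb _
    have h2 : h (bb (a+2,b,false,false,false)) = bb (a,b,true,false,false) := hb _
    rw [d1, h1, h2, map_zero]
    show bb (a,b,true,false,false) = 0 + bb (a,b,true,false,false) + 0; abel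
  · -- TFT
    have d1 : d (bb (a,b,true,false,true)) =
      bb (a+2,b,false,false,true) - bb (a,b+2,true,false,false) := hdv _
    have h1 : h (bb (a,b,true,false,true)) = 0 := hb _
    have h2 : h (bb (a+2,b,false,false,true)) = bb (a,b,true,false,true) := hb _
    have h3 : h (bb (a,b+2,true,false,false)) = 0 := hb _
    rw [d1, h1, map_sub, h2, h3, map_zero]
    show bb (a,b,true,false,true) = 0 + (bb (a,b,true,false,true) - 0) + 0; abel
  · -- TTF
    have d1 : d (bb (a,b,true,true,false)) =
      bb (a+2,b,false,true,false) - bb (a+1,b+1,true,false,false) := hdv _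
    have h1 : h (bb (a,b,true,true,false)) = 0 := hb _
    have h2 : h (bb (a+2,b,false,true,false)) = bb (a,b,true,true,false) := hb _
    have h3 : h (bb (a+1,b+1,true,false,false)) = 0 := hb _
    rw [d1, h1, map_sub, h2, h3, map_zero]
    show bb (a,b,true,true,false) = 0 + (bb (a,b,true,true,false) - 0) + 0; abel
  · -- TTT
    have d1 : d (bb (a,b,true,true,true)) =
      bb (a+2,b,false,true,true) - bb (a+1,b+1,true,false,true) +
        bb (a,b+2,true,true,false) := hdv _
    have h1 : h (bb (a,b,true,true,true)) = 0 := hb _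
    have h2 : h (bb (a+2,b,false,true,true)) = bb (a,b,true,true,true) := hb _
    have h3 : h (bb (a+1,b+1,true,false,true)) = 0 := hb _
    have h4 : h (bb (a,b+2,true,true,false)) = 0 := hb _
    rw [d1, h1, map_add, map_sub, h2, h3, h4, map_zero]
    show bb (a,b,true,true,true) = 0 + (bb (a,b,true,true,true) - 0 + 0) + 0; abel

section Lems
variable {A : Type} [Ring A] [Algebra ℚ A] (bb : Module.Basis MIdx ℚ A) (d : A →ₗ[ℚ] A)

theorem lemC1 : ∀ (k : Fin 6) (i : MIdx), (bb.repr (dval bb i)) (pidx k) = 0 := by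
  have P0 : pidx 0 = (0,0,false,false,false) := rfl
  have P1 : pidx 1 = (1,0,false,false,false) := rfl
  have P2 : pidx 2 = (0,1,false,false,false) := rfl
  have P3 : pidx 3 = (0,1,true,false,false) := rfl
  have P4 : pidx 4 = (0,1,false,true,false) := rfl
  have P5 : pidx 5 = (1,1,false,true,false) := rfl
  rintro k ⟨a, b, e₁, e₂, e₃⟩
  fin_cases k <;> cases e₁ <;> cases e₂ <;> cases e₃ <;>
    simp [dval, P0, P1, P2, P3, P4, P5, Module.Basis.repr_self, Finsupp.single_apply, Prod.ext_iff]

theorem lemC3 (hdv : ∀ i, d (bb i) = dval bb i) : ∀ i : MIdx, d (pv bb i) = 0 := by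
  rintro ⟨a, b, e₁, e₂, e₃⟩
  cases e₁ <;> cases e₂ <;> cases e₃ <;>
    first
      | (show d 0 = 0; simp)
      | (match a, b with
         | 0, 0 => simp [pv, p000, p010, p001, hdv, dval]
         | 1, 0 => simp [pv, p000, p010, p001, hdv, dval]
         | 0, 1 => simp [pv, p000, p010, p001, hdv, dval]
         | 1, 1 => simp [pv, p000, p010, p001, hdv, dval]
         | 0, b+2 => simp [pv, p000, p010, p001, hdv, dval]
         | 1, b+2 => simp [pv, p000, p010, p001, hdv, dval]
         | a+2, b => simp [pv, p000, p010, p001, hdv, dval])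

theorem lemWK (hdv : ∀ i, d (bb i) = dval bb i) : ∀ k : Fin 6, d (wv bb k) = 0 := by
  have W0 : wv bb 0 = bb (0,0,false,false,false) := rfl
  have W1 : wv bb 1 = bb (1,0,false,false,false) := rfl
  have W2 : wv bb 2 = bb (0,1,false,false,false) := rfl
  have W3 : wv bb 3 = bb (1,0,false,true,false) - bb (0,1,true,false,false) := rfl
  have W4 : wv bb 4 = bb (1,0,false,false,true) - bb (0,1,false,true,false) := rfl
  have W5 : wv bb 5 = bb (1,1,false,true,false) - bb (2,0,false,false,true) := rfl
  intro k
  fin_cases k <;> simp [W0, W1, W2, W3, W4, W5, hdv, dval]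

theorem lemC4 : ∀ i : MIdx, pv bb i = 0 ∨
    ∃ k : Fin 6, wLen k = mLen i ∧ pv bb i = wv bb k := by
  rintro ⟨a, b, e₁, e₂, e₃⟩
  cases e₁ <;> cases e₂ <;> cases e₃
  · -- FFF
    match a, b with
    | 0, 0 => exact Or.inr ⟨0, rfl, rfl⟩
    | 1, 0 => exact Or.inr ⟨1, rfl, rfl⟩
    | 0, 1 => exact Or.inr ⟨2, rfl, rfl⟩
    | 1, 1 => exact Or.inl rfl
    | 0, b+2 => exact Or.inl rfl
    | 1, b+2 => exact Or.inl rfl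
    | a+2, b => exact Or.inl rfl
  · -- FFT
    match a, b with
    | 0, b => exact Or.inl rfl
    | 1, 0 => exact Or.inr ⟨4, rfl, rfl⟩
    | 1, b+1 => exact Or.inl rfl
    | a+2, b => exact Or.inl rfl
  · -- FTF
    match a, b with
    | 0, b => exact Or.inl rfl
    | 1, 0 => exact Or.inr ⟨3, rfl, rfl⟩
    | 1, 1 => exact Or.inr ⟨5, rfl, rfl⟩
    | 1, b+2 => exact Or.inl rfl
    | a+2, b => exact Or.inl rfl
  · exact Or.inl rfl
  · exact Or.inl rfl
  · exact Or.inl rfl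
  · exact Or.inl rfl
  · exact Or.inl rfl

theorem lemC2 : ∀ k l : Fin 6, (bb.repr (wv bb l)) (pidx k) =
    if k = l then (![1,1,1,-1,-1,1] : Fin 6 → ℚ) k else 0 := by
  have P0 : pidx 0 = (0,0,false,false,false) := rfl
  have P1 : pidx 1 = (1,0,false,false,false) := rfl
  have P2 : pidx 2 = (0,1,false,false,false) := rfl
  have P3 : pidx 3 = (0,1,true,false,false) := rfl
  have P4 : pidx 4 = (0,1,false,true,false) := rfl
  have P5 : pidx 5 = (1,1,false,true,false) := rfl
  have W0 : wv bb 0 = bb (0,0,false,false,false) := rfl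
  have W1 : wv bb 1 = bb (1,0,false,false,false) := rfl
  have W2 : wv bb 2 = bb (0,1,false,false,false) := rfl
  have W3 : wv bb 3 = bb (1,0,false,true,false) - bb (0,1,true,false,false) := rfl
  have W4 : wv bb 4 = bb (1,0,false,false,true) - bb (0,1,false,true,false) := rfl
  have W5 : wv bb 5 = bb (1,1,false,true,false) - bb (2,0,false,false,true) := rfl
  have E0 : (![1,1,1,-1,-1,1] : Fin 6 → ℚ) 0 = 1 := rfl
  have E1 : (![1,1,1,-1,-1,1] : Fin 6 → ℚ) 1 = 1 := rfl
  have E2 : (![1,1,1,-1,-1,1] : Fin 6 → ℚ) 2 = 1 := rfl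
  have E3 : (![1,1,1,-1,-1,1] : Fin 6 → ℚ) 3 = -1 := rfl
  have E4 : (![1,1,1,-1,-1,1] : Fin 6 → ℚ) 4 = -1 := rfl
  have E5 : (![1,1,1,-1,-1,1] : Fin 6 → ℚ) 5 = 1 := rfl
  intro k l
  fin_cases k <;> fin_cases l <;>
    simp [P0, P1, P2, P3, P4, P5, W0, W1, W2, W3, W4, W5, E0, E1, E2, E3, E4, E5,
      Module.Basis.repr_self, Finsupp.single_apply, Prod.ext_iff]

end Lems
set_option maxHeartbeats 2000000 in
theorem stmt_9
    (A : Type) [Ring A] [Algebra ℚ A]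
    (x₁ x₂ y₁ y₂ y₃ : A)
    -- the monomials form a basis (freeness of ΛV)
    (bb : Module.Basis MIdx ℚ A)
    (hbb : ∀ (a b : ℕ) (e₁ e₂ e₃ : Bool),
      bb (a, b, e₁, e₂, e₃) =
        x₁ ^ a * x₂ ^ b * (if e₁ then y₁ else 1) * (if e₂ then y₂ else 1) *
          (if e₃ then y₃ else 1))
    -- graded commutativity
    (hx₁c : ∀ a : A, x₁ * a = a * x₁) (hx₂c : ∀ a : A, x₂ * a = a * x₂)
    (hy₁₁ : y₁ * y₁ = 0) (hy₂₂ : y₂ * y₂ = 0) (hy₃₃ : y₃ * y₃ = 0)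
    (hy₁₂ : y₁ * y₂ = -(y₂ * y₁)) (hy₁₃ : y₁ * y₃ = -(y₃ * y₁))
    (hy₂₃ : y₂ * y₃ = -(y₃ * y₂))
    -- the differential
    (d : A →ₗ[ℚ] A) (hd2 : d ∘ₗ d = 0)
    (hx₁ : x₁ ∈ LinearMap.ker d) (hx₂ : x₂ ∈ LinearMap.ker d)
    (hy₁ : d y₁ = x₁ ^ 2) (hy₂ : d y₂ = x₁ * x₂) (hy₃ : d y₃ = x₂ ^ 2)
    -- graded Leibniz rule (signs are governed by the parity of the number of odd
    -- factors, all other generators being of even degree)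
    (hleibeven : ∀ a ∈ Submodule.span ℚ (bb '' {i | Even (mOdd i)}), ∀ b : A,
      d (a * b) = d a * b + a * d b)
    (hleibodd : ∀ a ∈ Submodule.span ℚ (bb '' {i | Odd (mOdd i)}), ∀ b : A,
      d (a * b) = d a * b - a * d b) :
    -- conclusion: with H = ker d / im d and H_k the classes of cocycles of word
    -- length k:
    Module.finrank ℚ
        (LinearMap.ker d ⧸
          Submodule.comap (LinearMap.ker d).subtype (LinearMap.range d)) = 6 ∧
    Module.finrank ℚ
        (Submodule.map
          (Submodule.comap (LinearMap.ker d).subtype (LinearMap.range d)).mkQ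
          (Submodule.comap (LinearMap.ker d).subtype
            (Submodule.span ℚ (bb '' {i | mLen i = 0})))) = 1 ∧
    (Submodule.map
        (Submodule.comap (LinearMap.ker d).subtype (LinearMap.range d)).mkQ
        (Submodule.comap (LinearMap.ker d).subtype
          (Submodule.span ℚ (bb '' {i | mLen i = 1})))
      = Submodule.span ℚ
          {(Submodule.comap (LinearMap.ker d).subtype (LinearMap.range d)).mkQ
              ⟨x₁, hx₁⟩,
           (Submodule.comap (LinearMap.ker d).subtype (LinearMap.range d)).mkQ
              ⟨x₂, hx₂⟩}) ∧
    Module.finrank ℚ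
        (Submodule.map
          (Submodule.comap (LinearMap.ker d).subtype (LinearMap.range d)).mkQ
          (Submodule.comap (LinearMap.ker d).subtype
            (Submodule.span ℚ (bb '' {i | mLen i = 1})))) = 2 ∧
    Module.finrank ℚ
        (Submodule.map
          (Submodule.comap (LinearMap.ker d).subtype (LinearMap.range d)).mkQ
          (Submodule.comap (LinearMap.ker d).subtype
            (Submodule.span ℚ (bb '' {i | mLen i = 2})))) = 2 ∧
    Module.finrank ℚ
        (Submodule.map
          (Submodule.comap (LinearMap.ker d).subtype (LinearMap.range d)).mkQ
          (Submodule.comap (LinearMap.ker d).subtype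
            (Submodule.span ℚ (bb '' {i | mLen i = 3})))) = 1 := by
  have hdv : ∀ i, d (bb i) = dval bb i :=
    dbb x₁ x₂ y₁ y₂ y₃ bb hbb hx₁c hx₂c d hx₁ hx₂ hy₁ hy₂ hy₃ hleibeven hleibodd
  set K : Submodule ℚ A := LinearMap.ker d with hKdef
  set B : Submodule ℚ K := Submodule.comap K.subtype (LinearMap.range d) with hBdef
  -- matrix entry facts
  have W0 : wv bb 0 = bb (0,0,false,false,false) := rfl
  have W1 : wv bb 1 = bb (1,0,false,false,false) := rfl
  have W2 : wv bb 2 = bb (0,1,false,false,false) := rfl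
  have W3 : wv bb 3 = bb (1,0,false,true,false) - bb (0,1,true,false,false) := rfl
  have W4 : wv bb 4 = bb (1,0,false,false,true) - bb (0,1,false,true,false) := rfl
  have W5 : wv bb 5 = bb (1,1,false,true,false) - bb (2,0,false,false,true) := rfl
  have E0 : (![1,1,1,-1,-1,1] : Fin 6 → ℚ) 0 = 1 := rfl
  have E1 : (![1,1,1,-1,-1,1] : Fin 6 → ℚ) 1 = 1 := rfl
  have E2 : (![1,1,1,-1,-1,1] : Fin 6 → ℚ) 2 = 1 := rfl
  have E3 : (![1,1,1,-1,-1,1] : Fin 6 → ℚ) 3 = -1 := rfl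
  have E4 : (![1,1,1,-1,-1,1] : Fin 6 → ℚ) 4 = -1 := rfl
  have E5 : (![1,1,1,-1,-1,1] : Fin 6 → ℚ) 5 = 1 := rfl
  have L0 : wLen 0 = 0 := rfl
  have L1 : wLen 1 = 1 := rfl
  have L2 : wLen 2 = 1 := rfl
  have L3 : wLen 3 = 2 := rfl
  have L4 : wLen 4 = 2 := rfl
  have L5 : wLen 5 = 3 := rfl
  -- the homotopy and projection as linear maps
  set h : A →ₗ[ℚ] A := bb.constr ℕ (hm bb) with hhdef
  set Pl : A →ₗ[ℚ] A := bb.constr ℕ (pv bb) with hPldef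
  have hPlb : ∀ j, Pl (bb j) = pv bb j := fun j => bb.constr_basis ℕ (pv bb) j
  have idA : ∀ z : A, z = d (h z) + h (d z) + Pl z := by
    have heq : (LinearMap.id : A →ₗ[ℚ] A) = d ∘ₗ h + h ∘ₗ d + Pl := by
      apply bb.ext
      intro i
      simp only [LinearMap.id_coe, id_eq, LinearMap.add_apply, LinearMap.comp_apply, hPlb]
      exact hkey bb d hdv i
    intro z
    simpa using LinearMap.ext_iff.mp heq z
  have hdd : ∀ z : A, d (d z) = 0 := fun z => by
    simpa using LinearMap.ext_iff.mp hd2 z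
  have hdPl : ∀ z : A, d (Pl z) = 0 := by
    have heq : d ∘ₗ Pl = 0 := by
      apply bb.ext
      intro i
      simp only [LinearMap.comp_apply, hPlb, LinearMap.zero_apply]
      exact lemC3 bb d hdv i
    intro z; simpa using LinearMap.ext_iff.mp heq z
  have hPlK : ∀ z : A, Pl z ∈ K := fun z => LinearMap.mem_ker.mpr (hdPl z)
  have hwK : ∀ k : Fin 6, wv bb k ∈ K := fun k => LinearMap.mem_ker.mpr (lemWK bb d hdv k)
  have φd : ∀ (k : Fin 6) (v : A), v ∈ LinearMap.range d → bb.repr v (pidx k) = 0 := by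
    rintro k v ⟨u, rfl⟩
    have heq : (bb.coord (pidx k)) ∘ₗ d = 0 := by
      apply bb.ext
      intro i
      simp only [LinearMap.comp_apply, Module.Basis.coord_apply, hdv, LinearMap.zero_apply]
      exact lemC1 bb k i
    simpa [Module.Basis.coord_apply] using LinearMap.ext_iff.mp heq u
  -- classes of the harmonic representatives
  set wq : Fin 6 → (K ⧸ B) := fun k => B.mkQ ⟨wv bb k, hwK k⟩ with hwqdef
  have keyQ : ∀ y : K, B.mkQ y = B.mkQ ⟨Pl (y : A), hPlK _⟩ := by
    intro y
    have hy0 : d (y : A) = 0 := y.2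
    have h1 := idA (y : A)
    rw [hy0, map_zero, add_zero] at h1
    have h2 : d (h (y : A)) = (y : A) - Pl (y : A) := eq_sub_iff_add_eq.mpr h1.symm
    rw [Submodule.mkQ_apply, Submodule.mkQ_apply, Submodule.Quotient.eq]
    rw [hBdef, Submodule.mem_comap]
    exact ⟨h (y : A), by rw [h2]; rfl⟩
  have qzero : ∀ (v : A) (hv : v ∈ K), B.mkQ ⟨v, hv⟩ = 0 → v ∈ LinearMap.range d := by
    intro v hv h0
    rw [Submodule.mkQ_apply, Submodule.Quotient.mk_eq_zero] at h0
    exact h0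
  have hwq : ∀ g : Fin 6 → ℚ, ∑ k, g k • wq k =
      B.mkQ ⟨∑ k, g k • wv bb k,
        Submodule.sum_mem _ (fun k _ => Submodule.smul_mem _ _ (hwK k))⟩ := by
    intro g
    have h1 : (⟨∑ k, g k • wv bb k,
        Submodule.sum_mem _ (fun k _ => Submodule.smul_mem _ _ (hwK k))⟩ : K) =
        ∑ k, g k • (⟨wv bb k, hwK k⟩ : K) := by
      apply Subtype.ext
      simp
    rw [h1, map_sum]
    refine Finset.sum_congr rfl fun k _ => ?_
    rw [hwqdef]
    exact (map_smul B.mkQ (g k) (⟨wv bb k, hwK k⟩ : K)).symm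
  have coordSum : ∀ (g : Fin 6 → ℚ) (k : Fin 6),
      bb.repr (∑ l, g l • wv bb l) (pidx k) = g k * (![1,1,1,-1,-1,1] : Fin 6 → ℚ) k := by
    intro g k
    rw [map_sum, Finsupp.coe_finset_sum, Finset.sum_apply]
    have hterm : ∀ l, (bb.repr (g l • wv bb l)) (pidx k) =
        if k = l then g l * (![1,1,1,-1,-1,1] : Fin 6 → ℚ) k else 0 := by
      intro l
      rw [map_smul, Finsupp.smul_apply, lemC2 bb k l]
      by_cases hkl : k = l <;> simp [hkl]
    simp only [hterm]
    simp
  have zeroOfSum : ∀ G : Fin 6 → ℚ, (∑ k, G k • wq k) = 0 → ∀ k, G k = 0 := by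
    intro G h0 k
    rw [hwq G] at h0
    have hmem := qzero _ _ h0
    have h1 := φd k _ hmem
    rw [coordSum] at h1
    fin_cases k <;> simp [E0, E1, E2, E3, E4, E5] at h1 <;> exact h1
  -- spanning facts for the projection
  have spanPlLen : ∀ (l : ℕ) (z : A), z ∈ Submodule.span ℚ (bb '' {i | mLen i = l}) →
      Pl z ∈ Submodule.span ℚ (wv bb '' {k | wLen k = l}) := by
    intro l z hz
    induction hz using Submodule.span_induction with
    | mem x hx =>
        obtain ⟨i, hi, rfl⟩ := hx
        rw [hPlb]
        rcases lemC4 bb i with h0 | ⟨k, hkl, hk⟩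
        · rw [h0]; exact Submodule.zero_mem _
        · rw [hk]
          exact Submodule.subset_span ⟨k, by rw [Set.mem_setOf_eq, hkl, hi], rfl⟩
    | zero => simp
    | add u v _ _ hu hv => rw [map_add]; exact Submodule.add_mem _ hu hv
    | smul a u _ hu => rw [map_smul]; exact Submodule.smul_mem _ _ hu
  have spanPlAll : ∀ z : A, Pl z ∈ Submodule.span ℚ (wv bb '' Set.univ) := by
    intro z
    have hz : z ∈ Submodule.span ℚ (Set.range bb) := by rw [bb.span_eq]; trivial
    induction hz using Submodule.span_induction with
    | mem x hx =>
        obtain ⟨i, rfl⟩ := hx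
        rw [hPlb]
        rcases lemC4 bb i with h0 | ⟨k, _, hk⟩
        · rw [h0]; exact Submodule.zero_mem _
        · rw [hk]; exact Submodule.subset_span ⟨k, trivial, rfl⟩
    | zero => simp
    | add u v _ _ hu hv => rw [map_add]; exact Submodule.add_mem _ hu hv
    | smul a u _ hu => rw [map_smul]; exact Submodule.smul_mem _ _ hu
  have liftSpan : ∀ (s : Set (Fin 6)) (v : A), v ∈ Submodule.span ℚ (wv bb '' s) →
      ∃ hv : v ∈ K, B.mkQ ⟨v, hv⟩ ∈ Submodule.span ℚ (wq '' s) := by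
    intro s v hvs
    induction hvs using Submodule.span_induction with
    | mem x hx =>
        obtain ⟨k, hk, rfl⟩ := hx
        exact ⟨hwK k, Submodule.subset_span ⟨k, hk, rfl⟩⟩
    | zero =>
        refine ⟨Submodule.zero_mem _, ?_⟩
        have : (⟨(0 : A), Submodule.zero_mem K⟩ : K) = 0 := rfl
        rw [this, map_zero]
        exact Submodule.zero_mem _
    | add u v _ _ ihu ihv =>
        obtain ⟨hu, hqu⟩ := ihu
        obtain ⟨hv', hqv⟩ := ihv
        refine ⟨Submodule.add_mem _ hu hv', ?_⟩
        have : (⟨u + v, Submodule.add_mem _ hu hv'⟩ : K) = ⟨u, hu⟩ + ⟨v, hv'⟩ := rfl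
        rw [this, map_add]
        exact Submodule.add_mem _ hqu hqv
    | smul a u _ ihu =>
        obtain ⟨hu, hqu⟩ := ihu
        refine ⟨Submodule.smul_mem _ _ hu, ?_⟩
        have : (⟨a • u, Submodule.smul_mem _ a hu⟩ : K) = a • (⟨u, hu⟩ : K) := rfl
        rw [this, map_smul]
        exact Submodule.smul_mem _ _ hqu
  -- the general description of the length-graded pieces
  have goalEq : ∀ (l : ℕ) (s : Set (Fin 6)), {k : Fin 6 | wLen k = l} = s →
      (∀ k ∈ s, wv bb k ∈ Submodule.span ℚ (bb '' {i | mLen i = l})) →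
      Submodule.map B.mkQ
          (Submodule.comap K.subtype (Submodule.span ℚ (bb '' {i | mLen i = l})))
        = Submodule.span ℚ (wq '' s) := by
    intro l s hs hgen
    apply le_antisymm
    · rintro x ⟨y, hy, rfl⟩
      rw [keyQ y]
      have h1 : Pl (y : A) ∈ Submodule.span ℚ (wv bb '' s) := by
        rw [← hs]
        exact spanPlLen l _ (Submodule.mem_comap.mp hy)
      obtain ⟨hv, h2⟩ := liftSpan s _ h1
      exact h2
    · rw [Submodule.span_le]
      rintro x ⟨k, hk, rfl⟩
      exact ⟨⟨wv bb k, hwK k⟩, Submodule.mem_comap.mpr (hgen k hk), rfl⟩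
  -- set computations
  have hset0 : {k : Fin 6 | wLen k = 0} = {0} := by
    ext k; fin_cases k <;> simp [L0, L1, L2, L3, L4, L5]
  have hset1 : {k : Fin 6 | wLen k = 1} = {1, 2} := by
    ext k; fin_cases k <;> simp [L0, L1, L2, L3, L4, L5]
  have hset2 : {k : Fin 6 | wLen k = 2} = {3, 4} := by
    ext k; fin_cases k <;> simp [L0, L1, L2, L3, L4, L5]
  have hset3 : {k : Fin 6 | wLen k = 3} = {5} := by
    ext k; fin_cases k <;> simp [L0, L1, L2, L3, L4, L5]
  -- generators have the right word length
  have hgen0 : ∀ k ∈ ({0} : Set (Fin 6)),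
      wv bb k ∈ Submodule.span ℚ (bb '' {i | mLen i = 0}) := by
    intro k hk
    rw [Set.mem_singleton_iff] at hk
    subst hk
    rw [W0]
    exact Submodule.subset_span ⟨(0,0,false,false,false), rfl, rfl⟩
  have hgen1 : ∀ k ∈ ({1, 2} : Set (Fin 6)),
      wv bb k ∈ Submodule.span ℚ (bb '' {i | mLen i = 1}) := by
    intro k hk
    rcases hk with hk | hk <;> subst hk
    · rw [W1]; exact Submodule.subset_span ⟨(1,0,false,false,false), rfl, rfl⟩
    · rw [W2]; exact Submodule.subset_span ⟨(0,1,false,false,false), rfl, rfl⟩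
  have hgen2 : ∀ k ∈ ({3, 4} : Set (Fin 6)),
      wv bb k ∈ Submodule.span ℚ (bb '' {i | mLen i = 2}) := by
    intro k hk
    rcases hk with hk | hk <;> subst hk
    · rw [W3]
      exact Submodule.sub_mem _
        (Submodule.subset_span ⟨(1,0,false,true,false), rfl, rfl⟩)
        (Submodule.subset_span ⟨(0,1,true,false,false), rfl, rfl⟩)
    · rw [W4]
      exact Submodule.sub_mem _
        (Submodule.subset_span ⟨(1,0,false,false,true), rfl, rfl⟩)
        (Submodule.subset_span ⟨(0,1,false,true,false), rfl, rfl⟩)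
  have hgen3 : ∀ k ∈ ({5} : Set (Fin 6)),
      wv bb k ∈ Submodule.span ℚ (bb '' {i | mLen i = 3}) := by
    intro k hk
    rw [Set.mem_singleton_iff] at hk
    subst hk
    rw [W5]
    exact Submodule.sub_mem _
      (Submodule.subset_span ⟨(1,1,false,true,false), rfl, rfl⟩)
      (Submodule.subset_span ⟨(2,0,false,false,true), rfl, rfl⟩)
  -- nonvanishing of single classes
  have wqne : ∀ k : Fin 6, wq k ≠ 0 := by
    intro k h0
    have hmem := qzero _ (hwK k) h0
    have h1 := φd k _ hmem
    rw [lemC2 bb k k] at h1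
    fin_cases k <;> simp [E0, E1, E2, E3, E4, E5] at h1
  -- pairwise independence for the two 2-dimensional pieces
  have ind12 : LinearIndependent ℚ ![wq 1, wq 2] := by
    rw [Fintype.linearIndependent_iff]
    intro g hg
    rw [Fin.sum_univ_two] at hg
    simp only [Matrix.cons_val_zero, Matrix.cons_val_one, Matrix.head_cons] at hg
    have e1 : (![0, g 0, g 1, 0, 0, 0] : Fin 6 → ℚ) 1 = g 0 := rfl
    have e2 : (![0, g 0, g 1, 0, 0, 0] : Fin 6 → ℚ) 2 = g 1 := rfl
    have h6 : ∑ k, (![0, g 0, g 1, 0, 0, 0] : Fin 6 → ℚ) k • wq k = 0 := by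
      rw [Fin.sum_univ_six]
      show (0:ℚ) • wq 0 + g 0 • wq 1 + g 1 • wq 2 + (0:ℚ) • wq 3 + (0:ℚ) • wq 4 +
        (0:ℚ) • wq 5 = 0
      simpa using hg
    have hz := zeroOfSum _ h6
    intro i
    fin_cases i
    · exact hz 1
    · exact hz 2
  have ind34 : LinearIndependent ℚ ![wq 3, wq 4] := by
    rw [Fintype.linearIndependent_iff]
    intro g hg
    rw [Fin.sum_univ_two] at hg
    simp only [Matrix.cons_val_zero, Matrix.cons_val_one, Matrix.head_cons] at hg
    have e1 : (![0, 0, 0, g 0, g 1, 0] : Fin 6 → ℚ) 3 = g 0 := rfl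
    have e2 : (![0, 0, 0, g 0, g 1, 0] : Fin 6 → ℚ) 4 = g 1 := rfl
    have h6 : ∑ k, (![0, 0, 0, g 0, g 1, 0] : Fin 6 → ℚ) k • wq k = 0 := by
      rw [Fin.sum_univ_six]
      show (0:ℚ) • wq 0 + (0:ℚ) • wq 1 + (0:ℚ) • wq 2 + g 0 • wq 3 + g 1 • wq 4 +
        (0:ℚ) • wq 5 = 0
      simpa using hg
    have hz := zeroOfSum _ h6
    intro i
    fin_cases i
    · exact hz 3
    · exact hz 4
  -- full independence and spanning : dimension 6
  have ind6 : LinearIndependent ℚ wq := Fintype.linearIndependent_iff.mpr zeroOfSum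
  have span6 : ⊤ ≤ Submodule.span ℚ (Set.range wq) := by
    intro x _
    obtain ⟨y, rfl⟩ := B.mkQ_surjective x
    rw [keyQ y]
    obtain ⟨hv, h2⟩ := liftSpan Set.univ _ (spanPlAll (y : A))
    rw [Set.image_univ] at h2
    exact h2
  refine ⟨?_, ?_, ?_, ?_, ?_, ?_⟩
  · -- total dimension 6
    have hb : Module.Basis (Fin 6) ℚ (K ⧸ B) := Module.Basis.mk ind6 span6
    rw [Module.finrank_eq_card_basis hb]
    simp
  · -- length 0 : dimension 1
    rw [goalEq 0 {0} hset0 hgen0, Set.image_singleton]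
    exact finrank_span_singleton (wqne 0)
  · -- length 1 : the classes of x₁ and x₂
    rw [goalEq 1 {1, 2} hset1 hgen1]
    have himg : wq '' {1, 2} = {wq 1, wq 2} := by
      rw [Set.image_insert_eq, Set.image_singleton]
    rw [himg]
    have ex1 : x₁ = bb (1,0,false,false,false) := by rw [hbb]; simp
    have ex2 : x₂ = bb (0,1,false,false,false) := by rw [hbb]; simp
    have hk1 : (⟨wv bb 1, hwK 1⟩ : K) = ⟨x₁, hx₁⟩ :=
      Subtype.ext (show wv bb 1 = x₁ by rw [W1, ex1])
    have hk2 : (⟨wv bb 2, hwK 2⟩ : K) = ⟨x₂, hx₂⟩ :=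
      Subtype.ext (show wv bb 2 = x₂ by rw [W2, ex2])
    have hq1 : wq 1 = B.mkQ ⟨x₁, hx₁⟩ := congrArg B.mkQ hk1
    have hq2 : wq 2 = B.mkQ ⟨x₂, hx₂⟩ := congrArg B.mkQ hk2
    rw [hq1, hq2]
  · -- length 1 : dimension 2
    rw [goalEq 1 {1, 2} hset1 hgen1]
    have himg : wq '' {1, 2} = Set.range ![wq 1, wq 2] := by
      rw [Set.image_insert_eq, Set.image_singleton, rangePair]
    rw [himg, finrank_span_eq_card ind12]
    simp
  · -- length 2 : dimension 2
    rw [goalEq 2 {3, 4} hset2 hgen2]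
    have himg : wq '' {3, 4} = Set.range ![wq 3, wq 4] := by
      rw [Set.image_insert_eq, Set.image_singleton, rangePair]
    rw [himg, finrank_span_eq_card ind34]
    simp
  · -- length 3 : dimension 1
    rw [goalEq 3 {5} hset3 hgen3, Set.image_singleton]
    exact finrank_span_singleton (wqne 5)
end

section
/- Let H be a finite-dimensional graded-commutative ℚ-algebra satisfying Poincaré duality with formal dimension N and fundamental class μ ∈ H^N, arising as the cohomology of a minimal algebra ΛV. Then e₀(ΛV) = e₀(μ): the Toomer invariant of the algebra equals the Toomer invariant of the fundamental class. -/
/-- Félix–Halperin.  Let `ΛV` be a minimal algebra (word-length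
grading `W`, decomposable differential) whose cohomology satisfies Poincaré duality
with formal dimension `N` and fundamental cocycle `μ`.  Then `e₀(ΛV) = e₀(μ)`:
the least `n` for which `p_n : ΛV → ΛV/Λ^{≥ n+1}V` is injective on cohomology
equals the least `n` for which `p_n^*[μ] ≠ 0`. -/
theorem stmt_12
    (A : Type) [Ring A] [Algebra ℚ A]
    -- topological (upper) grading
    (G : ℕ → Submodule ℚ A)
    (hGfull : ⨆ i, G i = ⊤) (hGindep : iSupIndep G)
    (hGmul : ∀ i j : ℕ, ∀ a ∈ G i, ∀ b ∈ G j, a * b ∈ G (i + j))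
    -- word-length grading
    (W : ℕ → Submodule ℚ A)
    (hWfull : ⨆ k, W k = ⊤) (hWindep : iSupIndep W)
    (hWmul : ∀ j k : ℕ, ∀ a ∈ W j, ∀ b ∈ W k, a * b ∈ W (j + k))
    -- the differential: degree +1, minimal (decomposable), graded Leibniz rule
    (d : A →ₗ[ℚ] A) (hd2 : d ∘ₗ d = 0)
    (hdeg : ∀ i, ∀ a ∈ G i, d a ∈ G (i + 1))
    (hmin : ∀ k, ∀ z ∈ W k, d z ∈ ⨆ m, ⨆ (_ : k + 1 ≤ m), W m)
    (hleib : ∀ i : ℕ, ∀ a ∈ G i, ∀ b : A,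
      d (a * b) = d a * b + ((-1 : ℚ) ^ i) • (a * d b))
    -- Poincaré duality with formal dimension N and fundamental cocycle μ
    (N : ℕ) (μ : A) (hμdeg : μ ∈ G N) (hμcoc : d μ = 0)
    (hμne : ¬ ∃ v : A, d v = μ)
    (htop : ∀ i, N < i → ∀ z ∈ G i, d z = 0 → ∃ v, d v = z)
    (hPD : ∀ i, ∀ z ∈ G i, d z = 0 → (¬ ∃ v, d v = z) →
      ∃ w ∈ G (N - i), d w = 0 ∧ ∃ c : ℚ, c ≠ 0 ∧ ∃ v : A, z * w - c • μ = d v) :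
    sInf {n : ℕ | ∀ z : A, d z = 0 →
        (∃ w : A, z - d w ∈ ⨆ m, ⨆ (_ : n + 1 ≤ m), W m) → ∃ w, d w = z}
      =
    sInf {n : ℕ | ¬ ∃ w : A, μ - d w ∈ ⨆ m, ⨆ (_ : n + 1 ≤ m), W m} := by
  classical
  -- `components of a sum of homogeneous elements vanishing`
  have hzero : ∀ (s : Finset ℕ) (a : ℕ → A), (∀ j ∈ s, a j ∈ G j) →
      (∑ j ∈ s, a j) = 0 → ∀ j ∈ s, a j = 0 := by
    intro s a ha hs j hj
    have h1 : a j ∈ G j := ha j hj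
    have heq : a j + ∑ k ∈ s.erase j, a k = 0 := by
      rw [Finset.add_sum_erase s a hj, hs]
    have h2 : a j ∈ ⨆ (k) (_ : k ≠ j), G k := by
      have : a j = -∑ k ∈ s.erase j, a k := eq_neg_of_add_eq_zero_left heq
      rw [this]
      exact Submodule.neg_mem _ (Submodule.sum_mem _ fun k hk =>
        Submodule.mem_iSup_of_mem k (Submodule.mem_iSup_of_mem
          (Finset.ne_of_mem_erase hk) (ha k (Finset.mem_of_mem_erase hk))))
    exact Submodule.disjoint_def.mp (hGindep j) _ h1 h2
  -- decomposition into homogeneous components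
  have hdecomp : ∀ z : A, ∃ (s : Finset ℕ) (a : ℕ → A),
      (∀ j, a j ∈ G j) ∧ z = ∑ j ∈ s, a j := by
    intro z
    have hz : z ∈ ⨆ i, G i := by rw [hGfull]; trivial
    obtain ⟨f, hf, hsum⟩ := (Submodule.mem_iSup_iff_exists_finsupp G z).mp hz
    exact ⟨f.support, f, hf, by rw [← hsum]; rfl⟩
  -- Leibniz against a cocycle
  have hleib0 : ∀ w : A, d w = 0 → ∀ v : A, d (v * w) = d v * w := by
    intro w hw v
    set L : A →ₗ[ℚ] A :=
      d ∘ₗ (LinearMap.mulRight ℚ w) - (LinearMap.mulRight ℚ w) ∘ₗ d with hL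
    have hker : (⨆ i, G i) ≤ LinearMap.ker L := by
      refine iSup_le fun i a ha => ?_
      have : d (a * w) = d a * w := by
        rw [hleib i a ha w, hw, mul_zero, smul_zero, add_zero]
      simp only [LinearMap.mem_ker, hL, LinearMap.sub_apply, LinearMap.comp_apply,
        LinearMap.mulRight_apply, this, sub_self]
    have hv : v ∈ LinearMap.ker L := hker (by rw [hGfull]; trivial)
    have := LinearMap.mem_ker.mp hv
    simpa only [hL, LinearMap.sub_apply, LinearMap.comp_apply,
      LinearMap.mulRight_apply, sub_eq_zero] using this
  -- the word-length filtration is a right ideal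
  have hQideal : ∀ n : ℕ, ∀ q ∈ (⨆ m, ⨆ (_ : n + 1 ≤ m), W m), ∀ w : A,
      q * w ∈ (⨆ m, ⨆ (_ : n + 1 ≤ m), W m) := by
    intro n q hq w
    have h1 : ∀ m, n + 1 ≤ m → ∀ a ∈ W m,
        a * w ∈ (⨆ m, ⨆ (_ : n + 1 ≤ m), W m) := by
      intro m hm a ha
      have hw : w ∈ ⨆ k, W k := by rw [hWfull]; trivial
      have hle : (⨆ k, W k) ≤
          Submodule.comap (LinearMap.mulLeft ℚ a) (⨆ m, ⨆ (_ : n + 1 ≤ m), W m) := by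
        refine iSup_le fun k b hb => ?_
        have hmem : a * b ∈ W (m + k) := hWmul m k a ha b hb
        exact Submodule.mem_iSup_of_mem (m + k)
          (Submodule.mem_iSup_of_mem (le_trans hm (Nat.le_add_right m k)) hmem)
      exact hle hw
    have hle2 : (⨆ m, ⨆ (_ : n + 1 ≤ m), W m) ≤
        Submodule.comap (LinearMap.mulRight ℚ w) (⨆ m, ⨆ (_ : n + 1 ≤ m), W m) := by
      exact iSup_le fun m => iSup_le fun hm a ha => h1 m hm a ha
    exact hle2 hq
  -- the two sets coincide
  have key : {n : ℕ | ∀ z : A, d z = 0 →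
        (∃ w : A, z - d w ∈ ⨆ m, ⨆ (_ : n + 1 ≤ m), W m) → ∃ w, d w = z}
      = {n : ℕ | ¬ ∃ w : A, μ - d w ∈ ⨆ m, ⨆ (_ : n + 1 ≤ m), W m} := by
    ext n
    simp only [Set.mem_setOf_eq]
    constructor
    · intro h hex
      exact hμne (h μ hμcoc hex)
    · intro hn z hz hex
      obtain ⟨v, hv⟩ := hex
      obtain ⟨s, a, ha, hs⟩ := hdecomp z
      -- each homogeneous component is a cocycle
      have hdj : ∀ j ∈ s, d (a j) = 0 := by
        intro j hj
        have hbsum : ∑ k ∈ s.image (· + 1), d (a (k - 1)) = 0 := by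
          rw [Finset.sum_image (by intro x _ y _ h; simp only at h; omega)]
          simp only [Nat.add_sub_cancel]
          rw [← map_sum, ← hs, hz]
        have hb : ∀ k ∈ s.image (· + 1), d (a (k - 1)) ∈ G k := by
          intro k hk
          obtain ⟨j', hj', rfl⟩ := Finset.mem_image.mp hk
          simpa only [Nat.add_sub_cancel] using hdeg j' (a j') (ha j')
        have := hzero _ _ hb hbsum (j + 1) (Finset.mem_image_of_mem _ hj)
        simpa only [Nat.add_sub_cancel] using this
      -- every component is a coboundary
      have hall : ∀ j ∈ s, ∃ u, d u = a j := by
        by_contra hcon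
        push_neg at hcon
        set T : Finset ℕ := s.filter (fun j => ¬ ∃ u, d u = a j) with hT
        have hTne : T.Nonempty := by
          obtain ⟨j, hj, hjn⟩ := hcon
          exact ⟨j, Finset.mem_filter.mpr ⟨hj, not_exists.mpr hjn⟩⟩
        set i : ℕ := T.min' hTne with hi
        have hiT : i ∈ T := Finset.min'_mem T hTne
        have hi_s : i ∈ s := (Finset.mem_filter.mp hiT).1
        have hi_nc : ¬ ∃ u, d u = a i := (Finset.mem_filter.mp hiT).2
        obtain ⟨w0, hw0G, hw0c, c, hc, v', hv'⟩ :=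
          hPD i (a i) (ha i) (hdj i hi_s) hi_nc
        -- the other components kill `w0` up to coboundaries
        have herase : ∀ j ∈ s.erase i, ∃ u, d u = a j * w0 := by
          intro j hj
          have hjs : j ∈ s := Finset.mem_of_mem_erase hj
          have hjne : j ≠ i := Finset.ne_of_mem_erase hj
          rcases lt_or_gt_of_ne hjne with hlt | hgt
          · -- below the minimum: a coboundary
            have hjnT : j ∉ T := fun hjT => absurd (Finset.min'_le T j hjT) (by omega)
            have : ∃ u, d u = a j := by
              by_contra hne
              exact hjnT (Finset.mem_filter.mpr ⟨hjs, hne⟩)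
            obtain ⟨u, hu⟩ := this
            exact ⟨u * w0, by rw [hleib0 w0 hw0c u, hu]⟩
          · -- above the minimum: degree reason
            have hdegj : a j * w0 ∈ G (j + (N - i)) := hGmul j (N - i) (a j) (ha j) w0 hw0G
            have hcoc : d (a j * w0) = 0 := by
              rw [hleib0 w0 hw0c (a j), hdj j hjs, zero_mul]
            exact htop (j + (N - i)) (by omega) (a j * w0) hdegj hcoc
        choose uu huu using herase
        -- assemble
        have hS2 : d (∑ j ∈ (s.erase i).attach, uu j.1 j.2) = ∑ j ∈ s.erase i, a j * w0 := by
          rw [map_sum]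
          calc ∑ j ∈ (s.erase i).attach, d (uu j.1 j.2)
              = ∑ j ∈ (s.erase i).attach, a j.1 * w0 :=
                Finset.sum_congr rfl fun j _ => huu j.1 j.2
            _ = ∑ j ∈ s.erase i, a j * w0 := Finset.sum_attach _ (fun j => a j * w0)
        set S2 : A := ∑ j ∈ (s.erase i).attach, uu j.1 j.2 with hS2def
        have hzw : z * w0 = (d v' + c • μ) + d S2 := by
          have h1 : z * w0 = ∑ j ∈ s, a j * w0 := by rw [hs, Finset.sum_mul]
          have h2 : ∑ j ∈ s, a j * w0 = a i * w0 + ∑ j ∈ s.erase i, a j * w0 :=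
            (Finset.add_sum_erase s (fun j => a j * w0) hi_s).symm
          have h3 : a i * w0 = d v' + c • μ := by
            rw [sub_eq_iff_eq_add] at hv'; exact hv'
          rw [h1, h2, h3, hS2]
        have hmem : z * w0 - d (v * w0) ∈ (⨆ m, ⨆ (_ : n + 1 ≤ m), W m) := by
          have h4 := hQideal n _ hv w0
          rwa [sub_mul, ← hleib0 w0 hw0c v] at h4
        have hmem2 : c • μ - d (v * w0 - v' - S2) ∈ (⨆ m, ⨆ (_ : n + 1 ≤ m), W m) := by
          have heq : c • μ - d (v * w0 - v' - S2) = z * w0 - d (v * w0) := by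
            rw [map_sub, map_sub, hzw]; abel
          rw [heq]; exact hmem
        have hfinal : μ - d (c⁻¹ • (v * w0 - v' - S2)) ∈ (⨆ m, ⨆ (_ : n + 1 ≤ m), W m) := by
          have heq : μ - d (c⁻¹ • (v * w0 - v' - S2))
              = c⁻¹ • (c • μ - d (v * w0 - v' - S2)) := by
            rw [map_smul, smul_sub, smul_smul, inv_mul_cancel₀ hc, one_smul]
          rw [heq]; exact Submodule.smul_mem _ _ hmem2
        exact hn ⟨_, hfinal⟩
      choose u hu using hall
      refine ⟨∑ j ∈ s.attach, u j.1 j.2, ?_⟩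
      rw [map_sum]
      calc ∑ j ∈ s.attach, d (u j.1 j.2)
          = ∑ j ∈ s.attach, a j.1 := Finset.sum_congr rfl fun j _ => hu j.1 j.2
        _ = ∑ j ∈ s, a j := Finset.sum_attach _ _
        _ = z := hs.symm
  rw [key]
end

section
/- Let (ΛV, d) be an elliptic minimal algebra with homogeneous-length-l differential which decomposes as a short exact sequence of bigraded cohomology groups 0 → coker(θ*_{k−1−(l−2)}) →^{j*} H^*_k(ΛV) →^{p*} ker(θ*_k) → 0 for k = 1, …, f, where θ* is a derivation of strictly negative upper degree on H(ΛW) raising lower degree by l−2, and ΛW satisfies: H^*_k(ΛW) ≠ 0 for 0 ≤ k ≤ f, with bottom degrees m_k satisfying m_{k+(l−2)} ≥ m_k and top degrees M_k satisfying M_{k+(l−2)} ≥ M_k. Then both ker(θ*_k) and coker(θ*_{k−1−(l−2)}) are nonzero for k = 1, …, f, and hence dim H^*_k(ΛV) ≥ 2 for each k = 1, …, f. -/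
open Module

section Aux

variable {V : Type} [AddCommGroup V] [Module ℚ V] [FiniteDimensional ℚ V]

lemma aux_finite (G : ℤ → Submodule ℚ V) (hind : iSupIndep G) :
    {i : ℤ | G i ≠ ⊥}.Finite := by
  set S := {i : ℤ | G i ≠ ⊥} with hS
  have hv : ∀ i : S, ∃ x : V, x ∈ G i ∧ x ≠ 0 := by
    rintro ⟨i, hi⟩
    exact (Submodule.ne_bot_iff _).mp hi
  choose v hv1 hv2 using hv
  have hli : LinearIndependent ℚ v :=
    (hind.comp Subtype.val_injective).linearIndependent _ hv1 hv2
  have : Finite S := hli.finite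
  exact S.toFinite

end Aux

/-- mechanism of Case I of Theorem 2.2: no `e₀`-gaps.
Suppose the bigraded cohomology of `ΛV` fits into short exact sequences
`0 → coker θ*_{k-1-(l-2)} → H^*_k(ΛV) → ker θ*_k → 0` for `k = 1,…,f`, where
`θ*` is a derivation of strictly negative upper degree `-2r` on `H(ΛW)` raising
lower degree by `l-2`, and where `H^*_k(ΛW) ≠ 0` for `0 ≤ k ≤ f` with bottom
degrees satisfying `m_{k+(l-2)} ≥ m_k` and top degrees `M_{k+(l-2)} ≥ M_k`.
Then `ker θ*_k` and `coker θ*_{k-1-(l-2)}` are nonzero for `k = 1,…,f`, and hence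
`dim H^*_k(ΛV) ≥ 2` for each `k = 1,…,f`. -/
theorem stmt_18
    (l r : ℕ) (hl : 2 ≤ l) (hr : 1 ≤ r) (f : ℤ) (hf : 1 ≤ f)
    -- the bigraded pieces H^*_k(ΛW), with upper grading GW
    (HW : ℤ → Type) [∀ k, AddCommGroup (HW k)] [∀ k, Module ℚ (HW k)]
    [∀ k, FiniteDimensional ℚ (HW k)]
    (GW : ∀ k : ℤ, ℤ → Submodule ℚ (HW k))
    (hGWfull : ∀ k, ⨆ i, GW k i = ⊤)
    (hGWindep : ∀ k, iSupIndep (GW k))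
    (hWzero : ∀ k : ℤ, k < 0 ∨ f < k → Subsingleton (HW k))
    -- the pieces H^*_k(ΛV)
    (HV : ℤ → Type) [∀ k, AddCommGroup (HV k)] [∀ k, Module ℚ (HV k)]
    -- θ* raises lower degree by l-2 and has strictly negative upper degree -2r
    (θ : ∀ k m : ℤ, m = k + ((l : ℤ) - 2) → (HW k →ₗ[ℚ] HW m))
    (hθdeg : ∀ (k m : ℤ) (h : m = k + ((l : ℤ) - 2)) (i : ℤ),
      ∀ x ∈ GW k i, θ k m h x ∈ GW m (i - 2 * r))
    -- H^*_k(ΛW) ≠ 0 for 0 ≤ k ≤ f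
    (hWnz : ∀ k : ℤ, 0 ≤ k → k ≤ f → ∃ i, GW k i ≠ ⊥)
    -- bottom degrees: m_{k+(l-2)} ≥ m_k
    (hm : ∀ k : ℤ, 0 ≤ k → k + ((l : ℤ) - 2) ≤ f →
      sInf {i | GW k i ≠ ⊥} ≤ sInf {i | GW (k + ((l : ℤ) - 2)) i ≠ ⊥})
    -- top degrees: M_{k+(l-2)} ≥ M_k
    (hM : ∀ k : ℤ, 0 ≤ k → k + ((l : ℤ) - 2) ≤ f →
      sSup {i | GW k i ≠ ⊥} ≤ sSup {i | GW (k + ((l : ℤ) - 2)) i ≠ ⊥})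
    -- the short exact sequences
    -- 0 → coker θ*_{k-1-(l-2)} → H^*_k(ΛV) → ker θ*_k → 0
    (J : ∀ k : ℤ,
      (HW (k - 1) ⧸ LinearMap.range (θ (k - 1 - ((l : ℤ) - 2)) (k - 1) (by ring)))
        →ₗ[ℚ] HV k)
    (P : ∀ k : ℤ, HV k →ₗ[ℚ] HW k)
    (hJinj : ∀ k : ℤ, 1 ≤ k → k ≤ f → Function.Injective (J k))
    (hexact : ∀ (k : ℤ) (h1 : 1 ≤ k) (h2 : k ≤ f),
      LinearMap.ker (P k) = LinearMap.range (J k))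
    (hPrange : ∀ (k : ℤ) (h1 : 1 ≤ k) (h2 : k ≤ f),
      LinearMap.range (P k) = LinearMap.ker (θ k (k + ((l : ℤ) - 2)) rfl)) :
    ∀ k : ℤ, 1 ≤ k → k ≤ f →
      LinearMap.ker (θ k (k + ((l : ℤ) - 2)) rfl) ≠ ⊥ ∧
      LinearMap.range (θ (k - 1 - ((l : ℤ) - 2)) (k - 1) (by ring)) ≠ ⊤ ∧
      2 ≤ Module.finrank ℚ (HV k) := by
  intro k hk1 hk2
  have hr' : (1 : ℤ) ≤ (r : ℤ) := by exact_mod_cast hr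
  have hl' : (0 : ℤ) ≤ (l : ℤ) - 2 := by
    have : (2 : ℤ) ≤ (l : ℤ) := by exact_mod_cast hl
    linarith
  -- Part 1 : the kernel is nonzero
  have hker : LinearMap.ker (θ k (k + ((l : ℤ) - 2)) rfl) ≠ ⊥ := by
    by_cases hcase : k + ((l : ℤ) - 2) ≤ f
    · -- bottom-degree argument
      set S : Set ℤ := {i | GW k i ≠ ⊥} with hSdef
      have hSfin : S.Finite := aux_finite _ (hGWindep k)
      obtain ⟨i0, hi0⟩ := hWnz k (by linarith) hk2
      have hSne : S.Nonempty := ⟨i0, hi0⟩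
      have hmem : sInf S ∈ S := hSne.csInf_mem hSfin
      obtain ⟨x, hx, hx0⟩ := (Submodule.ne_bot_iff _).mp hmem
      have hθx : θ k (k + ((l : ℤ) - 2)) rfl x ∈
          GW (k + ((l : ℤ) - 2)) (sInf S - 2 * r) := hθdeg _ _ rfl _ x hx
      have hbot : GW (k + ((l : ℤ) - 2)) (sInf S - 2 * r) = ⊥ := by
        by_contra hne
        have h1 : sInf {i | GW (k + ((l : ℤ) - 2)) i ≠ ⊥} ≤ sInf S - 2 * r := by
          apply csInf_le ((aux_finite _ (hGWindep _)).bddBelow) hne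
        have h2 := hm k (by linarith) hcase
        rw [← hSdef] at h2
        omega
      have : θ k (k + ((l : ℤ) - 2)) rfl x = 0 := by
        have := hθx
        rw [hbot] at this
        simpa using this
      intro hb
      exact hx0 (by simpa [hb] using (LinearMap.mem_ker.mpr this))
    · -- the target is zero, the source is not
      have hsub : Subsingleton (HW (k + ((l : ℤ) - 2))) :=
        hWzero _ (Or.inr (by linarith))
      obtain ⟨i0, hi0⟩ := hWnz k (by linarith) hk2
      obtain ⟨x, hx, hx0⟩ := (Submodule.ne_bot_iff _).mp hi0
      have : θ k (k + ((l : ℤ) - 2)) rfl x = 0 := Subsingleton.elim _ _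
      intro hb
      exact hx0 (by simpa [hb] using (LinearMap.mem_ker.mpr this))
  -- Part 2 : the cokernel is nonzero, i.e. the range is not everything
  have hcoker : LinearMap.range (θ (k - 1 - ((l : ℤ) - 2)) (k - 1) (by ring)) ≠ ⊤ := by
    set k' : ℤ := k - 1 - ((l : ℤ) - 2) with hk'def
    obtain ⟨i1', hi1'⟩ := hWnz (k - 1) (by linarith) (by linarith)
    by_cases hcase : 0 ≤ k'
    · -- top-degree argument
      set T : Set ℤ := {i | GW (k - 1) i ≠ ⊥} with hTdef
      have hTfin : T.Finite := aux_finite _ (hGWindep _)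
      have hTne : T.Nonempty := ⟨i1', hi1'⟩
      set i1 : ℤ := sSup T with hi1def
      have hmem : i1 ∈ T := hTne.csSup_mem hTfin
      obtain ⟨x, hx, hx0⟩ := (Submodule.ne_bot_iff _).mp hmem
      have hMk := hM k' hcase (by rw [hk'def]; ring_nf; linarith)
      have hkk : k' + ((l : ℤ) - 2) = k - 1 := by rw [hk'def]; ring
      rw [hkk] at hMk
      rw [← hTdef, ← hi1def] at hMk
      -- the range lands in the degrees ≠ i1
      have hrange : LinearMap.range (θ k' (k - 1) (by rw [hk'def]; ring)) ≤
          ⨆ j, ⨆ (_ : j ≠ i1), GW (k - 1) j := by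
        rw [LinearMap.range_eq_map, ← hGWfull k', Submodule.map_iSup]
        apply iSup_le
        intro i
        by_cases hzi : GW k' i = ⊥
        · rw [hzi, Submodule.map_bot]
          exact bot_le
        · have hiS : i ∈ {j | GW k' j ≠ ⊥} := hzi
          have hile : i ≤ sSup {j | GW k' j ≠ ⊥} :=
            le_csSup (aux_finite _ (hGWindep _)).bddAbove hiS
          have hne : i - 2 * r ≠ i1 := by omega
          have hmap : Submodule.map (θ k' (k - 1) (by rw [hk'def]; ring)) (GW k' i) ≤
              GW (k - 1) (i - 2 * r) := by
            rintro y ⟨z, hz, rfl⟩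
            exact hθdeg _ _ _ _ z hz
          exact hmap.trans (le_iSup₂ (f := fun j (_ : j ≠ i1) => GW (k - 1) j) _ hne)
      intro htop
      have hxr : x ∈ LinearMap.range (θ k' (k - 1) (by rw [hk'def]; ring)) := by
        rw [htop]; trivial
      have hdisj := hGWindep (k - 1) i1
      have : x ∈ (⊥ : Submodule ℚ (HW (k - 1))) :=
        hdisj.le_bot ⟨hx, hrange hxr⟩
      exact hx0 (by simpa using this)
    · -- the source is zero, the target is not
      have hsub : Subsingleton (HW k') := hWzero _ (Or.inl (by omega))
      obtain ⟨x, hx, hx0⟩ := (Submodule.ne_bot_iff _).mp hi1'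
      intro htop
      have hxr : x ∈ LinearMap.range (θ k' (k - 1) (by rw [hk'def]; ring)) := by
        rw [htop]; trivial
      obtain ⟨y, hy⟩ := hxr
      have hy0 : y = 0 := Subsingleton.elim _ _
      rw [hy0, map_zero] at hy
      exact hx0 hy.symm
  refine ⟨hker, hcoker, ?_⟩
  -- Part 3 : the dimension estimate
  -- HV k is finite dimensional
  have hkerJ : LinearMap.ker (P k) = LinearMap.range (J k) := hexact k hk1 hk2
  have hFGker : (LinearMap.ker (P k)).FG := by
    rw [hkerJ, LinearMap.range_eq_map]
    exact Submodule.FG.map _ Module.Finite.fg_top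
  have hFGrange : (LinearMap.range (P k)).FG :=
    IsNoetherian.noetherian _
  have hfin : Module.Finite ℚ (HV k) := by
    rw [Module.finite_def]
    apply Submodule.fg_of_fg_map_of_fg_inf_ker (P k)
    · rwa [← LinearMap.range_eq_map]
    · rwa [top_inf_eq]
  -- finrank of the kernel of P k is at least 1
  have hntcoker : Nontrivial
      (HW (k - 1) ⧸ LinearMap.range (θ (k - 1 - ((l : ℤ) - 2)) (k - 1) (by ring))) :=
    Submodule.Quotient.nontrivial_iff.mpr hcoker
  have hfr1 : 1 ≤ finrank ℚ (LinearMap.ker (P k)) := by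
    rw [hkerJ]
    have := (LinearEquiv.ofInjective (J k) (hJinj k hk1 hk2)).finrank_eq
    rw [← this]
    exact Module.finrank_pos
  -- finrank of the range of P k is at least 1
  have hntker : Nontrivial (LinearMap.ker (θ k (k + ((l : ℤ) - 2)) rfl)) :=
    Submodule.nontrivial_iff_ne_bot.mpr hker
  have hfr2 : 1 ≤ finrank ℚ (LinearMap.range (P k)) := by
    have hfin2 : Module.Finite ℚ (LinearMap.range (P k)) := inferInstance
    rw [hPrange k hk1 hk2]
    exact Module.finrank_pos
  -- combine via rank-nullity
  have hsum := (LinearMap.ker (P k)).finrank_quotient_add_finrank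
  have hq : finrank ℚ (HV k ⧸ LinearMap.ker (P k)) = finrank ℚ (LinearMap.range (P k)) :=
    (P k).quotKerEquivRange.finrank_eq
  omega
end
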